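/- For all real numbers α, β ∈ [0,1]: 2·h((α+β)/2) − h(α) − h(β) ≥ (α − β)², where h is the binary entropy function with natural logarithm. -/

import Mathlib

/-- The binary entropy function `h(p) = -p ln p - (1-p) ln (1-p)`
(with the conventions `h 0 = h 1 = 0`, which hold automatically since
`Real.log 0 = 0`). -/
noncomputable def binEnt (p : ℝ) : ℝ := -(p * Real.log p) - (1 - p) * Real.log (1 - p)

private lemma aux_l0 {q : ℝ} (hq0 : 0 ≤ q) (hq1 : q < 1) :
    2 * q ^ 2 ≤ -Real.log (1 - q) := by
  set f : ℝ → ℝ := fun x => -Real.log (1 - x) - 2 * x ^ 2 with hf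
  have hder : ∀ x ∈ Set.Icc (0:ℝ) q, HasDerivAt f ((1 - x)⁻¹ - 4 * x) x := by
    intro x hx
    have hx1 : (1:ℝ) - x ≠ 0 := by
      have : x < 1 := lt_of_le_of_lt hx.2 hq1
      linarith
    have h1 : HasDerivAt (fun x : ℝ => Real.log (1 - x)) ((1 - x)⁻¹ * (0 - 1)) x :=
      (Real.hasDerivAt_log hx1).comp x ((hasDerivAt_const x (1:ℝ)).sub (hasDerivAt_id x))
    have h2 : HasDerivAt (fun x : ℝ => 2 * x ^ 2) (2 * (2 * x ^ 1 * 1)) x :=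
      ((hasDerivAt_id x).pow 2).const_mul 2
    have := (h1.neg).sub h2
    refine this.congr_deriv ?_
    ring
  have hmono : MonotoneOn f (Set.Icc 0 q) := by
    apply monotoneOn_of_deriv_nonneg (convex_Icc 0 q)
    · exact fun x hx => (hder x hx).continuousAt.continuousWithinAt
    · intro x hx
      exact ((hder x (interior_subset hx)).differentiableAt).differentiableWithinAt
    · intro x hx
      rw [interior_Icc] at hx
      rw [(hder x (Set.mem_Icc_of_Ioo hx)).deriv]
      have hx1 : 0 < 1 - x := by
        have : x < 1 := lt_of_lt_of_le hx.2 hq1.le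
        linarith
      have h4 : 4 * x ≤ 1 / (1 - x) := by
        rw [le_div_iff₀ hx1]; nlinarith [sq_nonneg (2*x - 1)]
      rw [inv_eq_one_div]
      linarith
  have h0 : f 0 = 0 := by simp [hf]
  have := hmono (Set.left_mem_Icc.2 hq0) (Set.right_mem_Icc.2 hq0) hq0
  rw [h0] at this
  simp only [hf] at this
  linarith

private lemma aux_l1 {q : ℝ} (hq0 : 0 < q) (hq1 : q ≤ 1) :
    2 * (1 - q) ^ 2 ≤ -Real.log q := by
  have := aux_l0 (q := 1 - q) (by linarith) (by linarith)
  simpa using this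

/-- Binary Pinsker inequality. -/
private lemma pinsker {p q : ℝ} (hp0 : 0 ≤ p) (hp1 : p ≤ 1) (hq0 : 0 < q) (hq1 : q < 1) :
    2 * (p - q) ^ 2 ≤
      p * Real.log p - p * Real.log q + (1 - p) * Real.log (1 - p)
        - (1 - p) * Real.log (1 - q) := by
  set g : ℝ → ℝ := fun x => p * Real.log p - p * Real.log x + (1 - p) * Real.log (1 - p)
      - (1 - p) * Real.log (1 - x) - 2 * (p - x) ^ 2 with hg
  have hder : ∀ x ∈ Set.Ioo (0:ℝ) 1,
      HasDerivAt g ((x - p) * (1 / (x * (1 - x)) - 4)) x := by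
    intro x hx
    have hx0 : x ≠ 0 := ne_of_gt hx.1
    have hx1 : (1:ℝ) - x ≠ 0 := by have := hx.2; intro h; linarith [h]
    have h1 : HasDerivAt (fun x : ℝ => p * Real.log x) (p * x⁻¹) x :=
      (Real.hasDerivAt_log hx0).const_mul p
    have h2 : HasDerivAt (fun x : ℝ => (1 - p) * Real.log (1 - x))
        ((1 - p) * ((1 - x)⁻¹ * (0 - 1))) x :=
      (((Real.hasDerivAt_log hx1).comp x
        ((hasDerivAt_const x (1:ℝ)).sub (hasDerivAt_id x)))).const_mul (1 - p)
    have h3 : HasDerivAt (fun x : ℝ => 2 * (p - x) ^ 2)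
        (2 * (2 * (p - x) ^ 1 * (0 - 1))) x :=
      (((hasDerivAt_const x p).sub (hasDerivAt_id x)).pow 2).const_mul 2
    have h4 := ((((hasDerivAt_const x (p * Real.log p)).sub h1).add
      (hasDerivAt_const x ((1 - p) * Real.log (1 - p)))).sub h2).sub h3
    refine h4.congr_deriv ?_
    have hx0' : x ≠ 0 := hx0
    field_simp
    ring
  have hgp0 : ∀ r : ℝ, g r = p * Real.log p - p * Real.log r + (1 - p) * Real.log (1 - p)
      - (1 - p) * Real.log (1 - r) - 2 * (p - r) ^ 2 := fun r => rfl
  have hfac : ∀ x : ℝ, x ∈ Set.Ioo (0:ℝ) 1 → (0:ℝ) ≤ 1 / (x * (1 - x)) - 4 := by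
    intro x hx
    have hpos : 0 < x * (1 - x) := mul_pos hx.1 (by linarith [hx.2])
    have : (4:ℝ) ≤ 1 / (x * (1 - x)) := by
      rw [le_div_iff₀ hpos]; nlinarith [sq_nonneg (2*x - 1)]
    linarith
  rcases eq_or_lt_of_le hp0 with hp0' | hp0'
  · -- p = 0
    subst hp0'
    simp only [zero_mul, sub_zero, zero_sub, neg_neg, one_mul, zero_add, sub_self,
      Real.log_one, mul_zero, zero_mul]
    have := aux_l0 hq0.le hq1
    nlinarith [this]
  rcases eq_or_lt_of_le hp1 with hp1' | hp1'
  · -- p = 1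
    subst hp1'
    simp only [Real.log_one, mul_zero, sub_self, zero_mul, mul_zero, sub_zero, zero_sub]
    have := aux_l1 hq0 hq1.le
    nlinarith [this]
  -- 0 < p < 1
  have hgp : g p = 0 := by rw [hgp0]; ring
  rcases le_total p q with hpq | hpq
  · -- monotone on [p, q]
    have hsub : Set.Icc p q ⊆ Set.Ioo (0:ℝ) 1 := fun x hx =>
      ⟨lt_of_lt_of_le hp0' hx.1, lt_of_le_of_lt hx.2 hq1⟩
    have hmono : MonotoneOn g (Set.Icc p q) := by
      apply monotoneOn_of_deriv_nonneg (convex_Icc p q)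
      · exact fun x hx => (hder x (hsub hx)).continuousAt.continuousWithinAt
      · exact fun x hx =>
          ((hder x (hsub (interior_subset hx))).differentiableAt).differentiableWithinAt
      · intro x hx
        rw [interior_Icc] at hx
        rw [(hder x (hsub (Set.mem_Icc_of_Ioo hx))).deriv]
        exact mul_nonneg (by linarith [hx.1]) (hfac x (hsub (Set.mem_Icc_of_Ioo hx)))
    have := hmono (Set.left_mem_Icc.2 hpq) (Set.right_mem_Icc.2 hpq) hpq
    rw [hgp] at this
    rw [hgp0] at this
    linarith
  · -- antitone on [q, p]
    have hsub : Set.Icc q p ⊆ Set.Ioo (0:ℝ) 1 := fun x hx =>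
      ⟨lt_of_lt_of_le hq0 hx.1, lt_of_le_of_lt hx.2 hp1'⟩
    have hanti : AntitoneOn g (Set.Icc q p) := by
      apply antitoneOn_of_deriv_nonpos (convex_Icc q p)
      · exact fun x hx => (hder x (hsub hx)).continuousAt.continuousWithinAt
      · exact fun x hx =>
          ((hder x (hsub (interior_subset hx))).differentiableAt).differentiableWithinAt
      · intro x hx
        rw [interior_Icc] at hx
        rw [(hder x (hsub (Set.mem_Icc_of_Ioo hx))).deriv]
        exact mul_nonpos_of_nonpos_of_nonneg (by linarith [hx.2])
          (hfac x (hsub (Set.mem_Icc_of_Ioo hx)))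
    have := hanti (Set.left_mem_Icc.2 hpq) (Set.right_mem_Icc.2 hpq) hpq
    rw [hgp] at this
    rw [hgp0] at this
    linarith

/-- for all `α, β ∈ [0,1]`,
`2 h((α+β)/2) - h(α) - h(β) ≥ (α - β)²`. -/
theorem stmt_10 (α β : ℝ) (hα0 : 0 ≤ α) (hα1 : α ≤ 1) (hβ0 : 0 ≤ β) (hβ1 : β ≤ 1) :
    (α - β) ^ 2 ≤ 2 * binEnt ((α + β) / 2) - binEnt α - binEnt β := by
  by_cases hm0 : α + β = 0
  · have hα : α = 0 := by linarith
    have hβ : β = 0 := by linarith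
    subst hα; subst hβ
    simp [binEnt]
  by_cases hm1 : α + β = 2
  · have hα : α = 1 := by linarith
    have hβ : β = 1 := by linarith
    subst hα; subst hβ
    simp [binEnt]
  have hq0 : 0 < (α + β) / 2 := by
    rcases lt_or_eq_of_le (by linarith : (0:ℝ) ≤ α + β) with h | h
    · linarith
    · exact absurd h.symm hm0
  have hq1 : (α + β) / 2 < 1 := by
    rcases lt_or_eq_of_le (by linarith : α + β ≤ 2) with h | h
    · linarith
    · exact absurd h hm1
  have P1 := pinsker hα0 hα1 hq0 hq1
  have P2 := pinsker hβ0 hβ1 hq0 hq1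
  have key : 2 * binEnt ((α + β) / 2) - binEnt α - binEnt β =
      (α * Real.log α - α * Real.log ((α + β) / 2) + (1 - α) * Real.log (1 - α)
        - (1 - α) * Real.log (1 - (α + β) / 2))
      + (β * Real.log β - β * Real.log ((α + β) / 2) + (1 - β) * Real.log (1 - β)
        - (1 - β) * Real.log (1 - (α + β) / 2)) := by
    simp only [binEnt]; ring
  have hr : (α - β) ^ 2 = 2 * (α - (α + β) / 2) ^ 2 + 2 * (β - (α + β) / 2) ^ 2 := by ring
  rw [key]
  linarith [P1, P2]
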